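/- For D = 2, dim H^3_d(2) satisfies: it is 0 for d < 3; k for d = 4 + 6k; and k+1 for d = 3 + 6k and for 5 + 6k ≤ d ≤ 8 + 6k (k ≥ 0). Equivalently, P(d − 3 + 3, 3) − P(d − 1 − 3 + 3, 3) = P(d, 3) − P(d − 1, 3) takes these values. -/

import Mathlib

noncomputable section

abbrev Idx (D : ℕ) : Type := Fin (D - 1) → ℕ

abbrev Th (D : ℕ) : Type := ExteriorAlgebra ℝ (Idx D →₀ ℝ)

def theta (D : ℕ) (S : Idx D) : Th D := ExteriorAlgebra.ι ℝ (Finsupp.single S (1:ℝ))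

def degIdx (D : ℕ) (S : Idx D) : ℕ := ∑ i, S i

def wedge (D : ℕ) {p : ℕ} (l : Fin p → Idx D) : Th D :=
  (List.ofFn fun j => theta D (l j)).prod

/-- The bidegree `(p,d)` component `Θ^p_d`. -/
def ThetaPD (D p d : ℕ) : Submodule ℝ (Th D) :=
  Submodule.span ℝ {x | ∃ l : Fin p → Idx D, (∑ j, degIdx D (l j)) = d ∧ x = wedge D l}

/-- The image `∂_{x^i} Θ^p_{d-1} ⊆ Θ^p_d`. -/
def DImg (D : ℕ) (i : Fin (D - 1)) (p d : ℕ) : Submodule ℝ (Th D) :=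
  Submodule.span ℝ {x | ∃ l : Fin p → Idx D, (∑ j, degIdx D (l j)) + 1 = d ∧
    x = ∑ j, wedge D (Function.update l j (l j + Pi.single i 1))}

/-- The dimension of `H^p_d(D) = Θ^p_d / (∂_{x^1}Θ^p_{d-1} + ⋯ + ∂_{x^{D-1}}Θ^p_{d-1})`. -/
def dimHpd (D p d : ℕ) : ℕ :=
  Module.finrank ℝ
    (↥(ThetaPD D p d) ⧸ Submodule.comap (ThetaPD D p d).subtype (⨆ i : Fin (D - 1), DImg D i p d))

/-- Number of partitions of `n` into exactly `k` positive parts. -/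
def Ppart (n k : ℕ) : ℕ := Set.ncard {π : Nat.Partition n | π.parts.card = k}

end

noncomputable section
namespace Stmt8Aux
open Finset ExteriorAlgebra

/-! ### Combinatorics -/

def T (d : ℕ) : Finset (ℕ × ℕ × ℕ) :=
  ((range (d+1)) ×ˢ (range (d+1)) ×ˢ (range (d+1))).filter
    fun p => p.1 < p.2.1 ∧ p.2.1 < p.2.2 ∧ p.1 + p.2.1 + p.2.2 = d

lemma mem_T {d : ℕ} {p : ℕ×ℕ×ℕ} :
    p ∈ T d ↔ p.1 < p.2.1 ∧ p.2.1 < p.2.2 ∧ p.1 + p.2.1 + p.2.2 = d := by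
  simp only [T, Finset.mem_filter, Finset.mem_product, Finset.mem_range]
  omega

def Q (d : ℕ) : ℕ := (T d).card

lemma Qrec (d : ℕ) : Q (d+3) = Q d + (d+2)/2 := by
  classical
  have hsplit : Q (d+3) = ((T (d+3)).filter (fun p => p.1 ≠ 0)).card
      + ((T (d+3)).filter (fun p => p.1 = 0)).card := by
    rw [Q, ← Finset.card_filter_add_card_filter_not (p := fun p => p.1 ≠ 0)]
    simp
  rw [hsplit]
  congr 1
  · rw [Q]
    apply Finset.card_nbij' (i := fun p => (p.1 - 1, p.2.1 - 1, p.2.2 - 1))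
      (j := fun p => (p.1 + 1, p.2.1 + 1, p.2.2 + 1))
    · intro p hp; simp [Finset.mem_filter, mem_T] at hp ⊢; omega
    · intro p hp; simp [Finset.mem_filter, mem_T] at hp ⊢; omega
    · rintro ⟨x,y,z⟩ hp; simp [Finset.mem_filter, mem_T] at hp
      simp only [Prod.mk.injEq]; omega
    · rintro ⟨x,y,z⟩ hp; simp [Finset.mem_filter, mem_T] at hp
      simp only [Prod.mk.injEq]; omega
  · have h2 : ((T (d+3)).filter (fun p => p.1 = 0)).card = (Finset.Ico 1 ((d+2)/2 + 1)).card := by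
      apply Finset.card_nbij' (i := fun p => p.2.1) (j := fun j => (0, j, d+3-j))
      · intro p hp; simp [Finset.mem_filter, mem_T] at hp; simp [Finset.mem_Ico]; omega
      · intro j hj; simp [Finset.mem_Ico] at hj; simp [Finset.mem_filter, mem_T]; omega
      · rintro ⟨x,y,z⟩ hp; simp [Finset.mem_filter, mem_T] at hp
        simp only [Prod.mk.injEq]; refine ⟨by omega, trivial, by omega⟩
      · intro j hj; simp
    rw [h2, Nat.card_Ico]; omega

lemma arith1 (d : ℕ) : ((d+3)*(d+3)+6)/12 = (d*d+6)/12 + (d+2)/2 := by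
  obtain ⟨q, r, hr, rfl⟩ : ∃ q r, r < 6 ∧ d = 6*q + r :=
    ⟨d/6, d%6, Nat.mod_lt _ (by norm_num), by omega⟩
  have h1 : (6*q+r+3)*(6*q+r+3) = 36*(q*q) + 12*q*r + 36*q + (r+3)*(r+3) := by ring
  have h2 : (6*q+r)*(6*q+r) = 36*(q*q) + 12*q*r + r*r := by ring
  rw [h1, h2]
  generalize q*q = s
  interval_cases r <;> omega

lemma Qval (d : ℕ) : Q d = (d*d+6)/12 := by
  induction d using Nat.strong_induction_on with
  | _ d ih =>
    match d with
    | 0 => decide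
    | 1 => decide
    | 2 => decide
    | (m+3) => rw [Qrec, ih m (by omega), arith1]

/-! ### Partitions -/

lemma sorted_parts {n : ℕ} (π : Nat.Partition n) (h : π.parts.card = 3) :
    ∃ a b c : ℕ, π.parts.sort (· ≤ ·) = [a, b, c] ∧ 1 ≤ a ∧ a ≤ b ∧ b ≤ c ∧ a + b + c = n := by
  set l := π.parts.sort (· ≤ ·) with hl
  have hlen : l.length = 3 := by rw [hl, Multiset.length_sort]; exact h
  match l, hlen with
  | [a, b, c], _ =>
    have hsort : List.Pairwise (· ≤ ·) ([a,b,c]) := by rw [hl]; exact Multiset.pairwise_sort _ _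
    simp only [List.pairwise_cons, List.mem_cons] at hsort
    have hmem : a ∈ π.parts := by
      rw [← Multiset.mem_sort (r := (· ≤ ·)), ← hl]; simp
    have hsum : a + b + c = n := by
      have := π.parts_sum
      rw [← Multiset.sort_eq (s := π.parts) (r := (· ≤ ·)), ← hl] at this
      simpa [add_assoc] using this
    exact ⟨a, b, c, rfl, π.parts_pos hmem, by simp_all, by simp_all, hsum⟩

lemma Ppart_eq (n : ℕ) : Ppart n 3 = Q n := by
  classical
  rw [Ppart, Set.ncard_eq_toFinset_card', Q]
  apply Finset.card_bij
    (i := fun π _ => ((π.parts.sort (· ≤ ·)).getD 0 0 - 1, (π.parts.sort (· ≤ ·)).getD 1 0,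
      (π.parts.sort (· ≤ ·)).getD 2 0 + 1))
  · intro π hπ
    simp only [Set.mem_toFinset, Set.mem_setOf_eq] at hπ
    obtain ⟨a, b, c, hl, ha, hab, hbc, hsum⟩ := sorted_parts π hπ
    rw [hl]
    simp only [List.getD]
    rw [mem_T]
    simp only []
    simp [List.getD]
    omega
  · intro π₁ h₁ π₂ h₂ heq
    simp only [Set.mem_toFinset, Set.mem_setOf_eq] at h₁ h₂
    obtain ⟨a₁, b₁, c₁, hl₁, ha₁, hab₁, hbc₁, hs₁⟩ := sorted_parts π₁ h₁
    obtain ⟨a₂, b₂, c₂, hl₂, ha₂, hab₂, hbc₂, hs₂⟩ := sorted_parts π₂ h₂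
    rw [hl₁, hl₂] at heq
    simp [List.getD, Prod.ext_iff] at heq
    have : a₁ = a₂ ∧ b₁ = b₂ ∧ c₁ = c₂ := by omega
    apply Nat.Partition.ext
    rw [← Multiset.sort_eq (s := π₁.parts) (r := (· ≤ ·)), ← Multiset.sort_eq (s := π₂.parts) (r := (· ≤ ·)), hl₁, hl₂]
    simp [this.1, this.2.1, this.2.2]
  · rintro ⟨x, y, z⟩ hp
    simp only [mem_T] at hp
    obtain ⟨hxy, hyz, hsum⟩ := hp
    refine ⟨⟨(x+1) ::ₘ y ::ₘ {z - 1}, ?_, ?_⟩, ?_, ?_⟩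
    · intro i hi
      simp [Multiset.mem_cons, Multiset.mem_singleton] at hi
      rcases hi with rfl | rfl | rfl <;> omega
    · simp; omega
    · simp only [Set.mem_toFinset, Set.mem_setOf_eq]; rfl
    · have hsorted : List.Pairwise (· ≤ ·) [x+1, y, z-1] := by
        simp [List.pairwise_cons]; omega
      have hperm : ((x+1) ::ₘ y ::ₘ {z - 1} : Multiset ℕ) = (↑[x+1, y, z-1] : Multiset ℕ) := by
        rfl
      have hsort_eq : Multiset.sort ((x+1) ::ₘ y ::ₘ {z - 1}) (· ≤ ·) = [x+1, y, z-1] := by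
        apply List.Perm.eq_of_pairwise' (Multiset.pairwise_sort _ _) hsorted
        rw [← Multiset.coe_eq_coe, Multiset.sort_eq, hperm]
      simp only [hsort_eq]
      simp [List.getD]
      omega

/-! ### The exterior algebra for `D = 2` -/

abbrev M2 := (Idx 2 →₀ ℝ)

def e (n : ℕ) : Idx 2 := fun _ => n

lemma e_inj : Function.Injective e := fun _ _ h => congrFun h 0

lemma fin1_eq_zero (i : Fin (2-1)) : i = 0 := by
  apply Fin.ext
  have := i.isLt
  simp only [Fin.val_zero]
  omega

lemma idx_eq (S : Idx 2) : S = e (S 0) := funext fun i => by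
  rw [fin1_eq_zero i]; rfl

lemma degIdx_e (n : ℕ) : degIdx 2 (e n) = n := by
  simp [degIdx, e]

lemma degIdx_eq (S : Idx 2) : degIdx 2 S = S 0 := by
  conv_lhs => rw [idx_eq S]
  exact degIdx_e _

def th (n : ℕ) : Th 2 := theta 2 (e n)

def W (a b c : ℕ) : Th 2 := th a * th b * th c

lemma wedge3 (l : Fin 3 → Idx 2) :
    wedge 2 l = theta 2 (l 0) * theta 2 (l 1) * theta 2 (l 2) := by
  simp [wedge, List.ofFn_succ, mul_assoc]

lemma th_swap (a b : ℕ) : th a * th b = -(th b * th a) :=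
  eq_neg_of_add_eq_zero_left (ι_add_mul_swap _ _)

lemma th_sq (a : ℕ) : th a * th a = 0 := ι_sq_zero _

lemma W_swap01 (a b c : ℕ) : W a b c = - W b a c := by
  unfold W; rw [th_swap a b, neg_mul]

lemma W_swap12 (a b c : ℕ) : W a b c = - W a c b := by
  unfold W; rw [mul_assoc, th_swap b c, mul_neg, ← mul_assoc]

lemma W_eq01 (a c : ℕ) : W a a c = 0 := by unfold W; rw [th_sq, zero_mul]
lemma W_eq12 (a c : ℕ) : W a c c = 0 := by unfold W; rw [mul_assoc, th_sq, mul_zero]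
lemma W_eq02 (a b : ℕ) : W a b a = 0 := by rw [W_swap12, W_eq01, neg_zero]

def Dw (a b c : ℕ) : Th 2 := W (a+1) b c + W a (b+1) c + W a b (c+1)

lemma Dw_swap01 (a b c : ℕ) : Dw a b c = - Dw b a c := by
  unfold Dw
  rw [W_swap01 (a+1) b c, W_swap01 a (b+1) c, W_swap01 a b (c+1)]
  abel

lemma Dw_swap12 (a b c : ℕ) : Dw a b c = - Dw a c b := by
  unfold Dw
  rw [W_swap12 (a+1) b c, W_swap12 a (b+1) c, W_swap12 a b (c+1)]
  abel

lemma Dw_eq01 (a c : ℕ) : Dw a a c = 0 := by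
  unfold Dw
  rw [W_eq01, W_swap01 a (a+1) c]
  abel

lemma Dw_eq12 (a c : ℕ) : Dw a c c = 0 := by
  unfold Dw
  rw [W_eq12, W_swap12 a c (c+1)]
  abel

lemma Dw_eq02 (a b : ℕ) : Dw a b a = 0 := by
  rw [Dw_swap12, Dw_eq01, neg_zero]

/-! ### Coefficient functionals -/

def coordMap (t : ℕ×ℕ×ℕ) : M2 →ₗ[ℝ] (Fin 3 → ℝ) :=
  LinearMap.pi (fun p => Finsupp.lapply (e (![t.1, t.2.1, t.2.2] p)))

def A (t : ℕ×ℕ×ℕ) : (M2 [⋀^Fin 3]→ₗ[ℝ] ℝ) :=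
  (Matrix.detRowAlternating : (Fin 3 → ℝ) [⋀^Fin 3]→ₗ[ℝ] ℝ).compLinearMap (coordMap t)

def fam (t : ℕ×ℕ×ℕ) : ∀ i : ℕ, (M2 [⋀^Fin i]→ₗ[ℝ] ℝ)
  | 3 => A t
  | _ => 0

def F (t : ℕ×ℕ×ℕ) : Th 2 →ₗ[ℝ] ℝ := ExteriorAlgebra.liftAlternating (fam t)

lemma W_eq_ιMulti (x y z : ℕ) :
    W x y z = ιMulti ℝ 3 (fun j => Finsupp.single (e (![x,y,z] j)) (1:ℝ)) := by
  rw [ιMulti_apply]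
  show W x y z = (List.ofFn fun i => theta 2 (e (![x,y,z] i))).prod
  simp [List.ofFn_succ, W, th, mul_assoc]

lemma F_W (t : ℕ×ℕ×ℕ) (x y z : ℕ) :
    F t (W x y z) = Matrix.det (Matrix.of fun q p : Fin 3 =>
      if ![x,y,z] q = ![t.1,t.2.1,t.2.2] p then (1:ℝ) else 0) := by
  rw [W_eq_ιMulti, F, liftAlternating_apply_ιMulti]
  have hfam : fam t 3 = A t := rfl
  rw [hfam, A, AlternatingMap.compLinearMap_apply, Matrix.detRowAlternating]
  congr 1
  funext q p
  show coordMap t (Finsupp.single (e (![x,y,z] q)) 1) p = _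
  simp only [coordMap, LinearMap.pi_apply, Finsupp.lapply_apply, Finsupp.single_apply,
    Matrix.of_apply]
  by_cases h : ![x,y,z] q = ![t.1,t.2.1,t.2.2] p
  · rw [if_pos (by rw [h]), if_pos h]
  · rw [if_neg (fun hc => h (e_inj hc)), if_neg h]

set_option maxHeartbeats 2000000 in
lemma F_W_val {a b c : ℕ} (x y z : ℕ) (hab : a < b) (hbc : b < c) (hxy : x ≤ y) (hyz : y ≤ z) :
    F (a,b,c) (W x y z) = if x = a ∧ y = b ∧ z = c then 1 else 0 := by
  rw [F_W, Matrix.det_fin_three]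
  simp only [Matrix.of_apply, Matrix.cons_val', Matrix.cons_val_zero, Matrix.cons_val_one,
    Matrix.head_cons, Matrix.cons_val_two, Matrix.tail_cons, Matrix.empty_val',
    Matrix.cons_val_fin_one, Matrix.head_fin_const]
  grind

lemma F_Dw_val {a b c : ℕ} (x y z : ℕ) (hab : a < b) (hbc : b < c) (hxy : x < y) (hyz : y < z) :
    F (a,b,c) (Dw x y z) =
      (if x+1 = a ∧ y = b ∧ z = c then 1 else 0) +
      (if x = a ∧ y+1 = b ∧ z = c then 1 else 0) +
      (if x = a ∧ y = b ∧ z+1 = c then 1 else 0) := by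
  unfold Dw
  rw [map_add, map_add,
    F_W_val (x+1) y z hab hbc (by omega) (by omega),
    F_W_val x (y+1) z hab hbc (by omega) (by omega),
    F_W_val x y (z+1) hab hbc (by omega) (by omega)]

end Stmt8Aux
end
noncomputable section
namespace Stmt8Aux
open Finset ExteriorAlgebra

/-! ### Span descriptions -/

def SW (d : ℕ) : Set (Th 2) := (fun p : ℕ×ℕ×ℕ => W p.1 p.2.1 p.2.2) '' ↑(T d)
def SD (d : ℕ) : Set (Th 2) := (fun p : ℕ×ℕ×ℕ => Dw p.1 p.2.1 p.2.2) '' ↑(T d)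

lemma W_mem_span (x y z : ℕ) : W x y z ∈ Submodule.span ℝ (SW (x+y+z)) := by
  have base : ∀ a b c : ℕ, a < b → b < c → a+b+c = x+y+z →
      W a b c ∈ Submodule.span ℝ (SW (x+y+z)) := fun a b c hab hbc hs =>
    Submodule.subset_span ⟨(a,b,c), by simpa [mem_T] using ⟨hab, hbc, hs⟩, rfl⟩
  rcases lt_trichotomy x y with hxy | rfl | hxy
  · rcases lt_trichotomy y z with hyz | rfl | hyz
    · exact base x y z hxy hyz rfl
    · rw [W_eq12]; exact Submodule.zero_mem _
    · rcases lt_trichotomy x z with hxz | rfl | hxz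
      · rw [W_swap12]; exact neg_mem (base x z y hxz hyz (by omega))
      · rw [W_eq02]; exact Submodule.zero_mem _
      · rw [W_swap12 x y z, W_swap01 x z y, neg_neg]
        exact base z x y hxz hxy (by omega)
  · rw [W_eq01]; exact Submodule.zero_mem _
  · rcases lt_trichotomy x z with hxz | rfl | hxz
    · rw [W_swap01]; exact neg_mem (base y x z hxy hxz (by omega))
    · rw [W_eq02]; exact Submodule.zero_mem _
    · rcases lt_trichotomy y z with hyz | rfl | hyz
      · rw [W_swap01 x y z, W_swap12 y x z, neg_neg]
        exact base y z x hyz hxz (by omega)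
      · rw [W_eq12]; exact Submodule.zero_mem _
      · rw [W_swap01 x y z, W_swap12 y x z, neg_neg, W_swap01 y z x]
        exact neg_mem (base z y x hyz hxy (by omega))

lemma Dw_mem_span (x y z : ℕ) : Dw x y z ∈ Submodule.span ℝ (SD (x+y+z)) := by
  have base : ∀ a b c : ℕ, a < b → b < c → a+b+c = x+y+z →
      Dw a b c ∈ Submodule.span ℝ (SD (x+y+z)) := fun a b c hab hbc hs =>
    Submodule.subset_span ⟨(a,b,c), by simpa [mem_T] using ⟨hab, hbc, hs⟩, rfl⟩
  rcases lt_trichotomy x y with hxy | rfl | hxy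
  · rcases lt_trichotomy y z with hyz | rfl | hyz
    · exact base x y z hxy hyz rfl
    · rw [Dw_eq12]; exact Submodule.zero_mem _
    · rcases lt_trichotomy x z with hxz | rfl | hxz
      · rw [Dw_swap12]; exact neg_mem (base x z y hxz hyz (by omega))
      · rw [Dw_eq02]; exact Submodule.zero_mem _
      · rw [Dw_swap12 x y z, Dw_swap01 x z y, neg_neg]
        exact base z x y hxz hxy (by omega)
  · rw [Dw_eq01]; exact Submodule.zero_mem _
  · rcases lt_trichotomy x z with hxz | rfl | hxz
    · rw [Dw_swap01]; exact neg_mem (base y x z hxy hxz (by omega))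
    · rw [Dw_eq02]; exact Submodule.zero_mem _
    · rcases lt_trichotomy y z with hyz | rfl | hyz
      · rw [Dw_swap01 x y z, Dw_swap12 y x z, neg_neg]
        exact base y z x hyz hxz (by omega)
      · rw [Dw_eq12]; exact Submodule.zero_mem _
      · rw [Dw_swap01 x y z, Dw_swap12 y x z, neg_neg, Dw_swap01 y z x]
        exact neg_mem (base z y x hyz hxy (by omega))

lemma theta_eq_th (S : Idx 2) : theta 2 S = th (S 0) := by
  conv_lhs => rw [idx_eq S]
  rfl


lemma e_add_single (S : Idx 2) : S + Pi.single (0 : Fin (2-1)) 1 = e (S 0 + 1) := by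
  funext i
  rw [fin1_eq_zero i, Pi.add_apply, Pi.single_eq_same]
  rfl

lemma Theta_eq (d : ℕ) : ThetaPD 2 3 d = Submodule.span ℝ (SW d) := by
  apply le_antisymm
  · rw [ThetaPD, Submodule.span_le]
    rintro _ ⟨l, hsum, rfl⟩
    have hw : wedge 2 l = W (l 0 0) (l 1 0) (l 2 0) := by
      rw [wedge3, theta_eq_th, theta_eq_th, theta_eq_th]; rfl
    have hs : l 0 0 + l 1 0 + l 2 0 = d := by
      rw [Fin.sum_univ_three, degIdx_eq, degIdx_eq, degIdx_eq] at hsum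
      exact hsum
    rw [SetLike.mem_coe, hw, ← hs]
    exact W_mem_span _ _ _
  · rw [Submodule.span_le]
    rintro _ ⟨⟨a,b,c⟩, hp, rfl⟩
    simp only [Finset.mem_coe, mem_T] at hp
    apply Submodule.subset_span
    refine ⟨fun j => e (![a,b,c] j), ?_, ?_⟩
    · rw [Fin.sum_univ_three]
      simp only [Matrix.cons_val_zero, Matrix.cons_val_one, Matrix.head_cons,
        Matrix.cons_val_two, Matrix.tail_cons, degIdx_e]
      omega
    · rw [wedge3]
      simp only [Matrix.cons_val_zero, Matrix.cons_val_one, Matrix.head_cons,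
        Matrix.cons_val_two, Matrix.tail_cons]
      rfl

lemma sum_wedge_update (l : Fin 3 → Idx 2) :
    (∑ j, wedge 2 (Function.update l j (l j + Pi.single (0 : Fin (2-1)) 1)))
      = Dw (l 0 0) (l 1 0) (l 2 0) := by
  rw [Fin.sum_univ_three, wedge3, wedge3, wedge3]
  rw [Function.update_self, Function.update_self, Function.update_self,
    Function.update_of_ne (show (1:Fin 3) ≠ 0 by decide),
    Function.update_of_ne (show (2:Fin 3) ≠ 0 by decide),
    Function.update_of_ne (show (0:Fin 3) ≠ 1 by decide),
    Function.update_of_ne (show (2:Fin 3) ≠ 1 by decide),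
    Function.update_of_ne (show (0:Fin 3) ≠ 2 by decide),
    Function.update_of_ne (show (1:Fin 3) ≠ 2 by decide)]
  rw [e_add_single (l 0), e_add_single (l 1), e_add_single (l 2),
    theta_eq_th (l 0), theta_eq_th (l 1), theta_eq_th (l 2)]
  rfl

lemma DImg_eq (d : ℕ) : DImg 2 0 3 d = Submodule.span ℝ (SD (d-1)) := by
  apply le_antisymm
  · rw [DImg, Submodule.span_le]
    rintro _ ⟨l, hsum, rfl⟩
    have hs : l 0 0 + l 1 0 + l 2 0 = d - 1 := by
      rw [Fin.sum_univ_three, degIdx_eq, degIdx_eq, degIdx_eq] at hsum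
      omega
    rw [SetLike.mem_coe, sum_wedge_update, ← hs]
    exact Dw_mem_span _ _ _
  · rw [Submodule.span_le]
    rintro _ ⟨⟨a,b,c⟩, hp, rfl⟩
    simp only [Finset.mem_coe, mem_T] at hp
    apply Submodule.subset_span
    refine ⟨fun j => e (![a,b,c] j), ?_, ?_⟩
    · rw [Fin.sum_univ_three]
      simp only [Matrix.cons_val_zero, Matrix.cons_val_one, Matrix.head_cons,
        Matrix.cons_val_two, Matrix.tail_cons, degIdx_e]
      omega
    · rw [sum_wedge_update]
      simp only [Matrix.cons_val_zero, Matrix.cons_val_one, Matrix.head_cons,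
        Matrix.cons_val_two, Matrix.tail_cons]
      rfl

end Stmt8Aux
end
noncomputable section
namespace Stmt8Aux
open Finset ExteriorAlgebra

lemma indep_W (d : ℕ) :
    LinearIndependent ℝ (fun p : {x // x ∈ T d} => W p.1.1 p.1.2.1 p.1.2.2) := by
  rw [Fintype.linearIndependent_iff]
  intro g hg p
  obtain ⟨⟨pa, pb, pc⟩, hp⟩ := p
  have hpT := hp; rw [mem_T] at hpT
  have h := congrArg (F (pa, pb, pc)) hg
  simp only [map_sum, map_smul, map_zero] at h
  rw [Finset.sum_eq_single (⟨(pa,pb,pc), hp⟩ : {x // x ∈ T d})] at h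
  · rw [F_W_val _ _ _ hpT.1 hpT.2.1 (le_of_lt hpT.1) (le_of_lt hpT.2.1),
      if_pos ⟨rfl, rfl, rfl⟩, smul_eq_mul, mul_one] at h
    exact h
  · rintro ⟨⟨qa, qb, qc⟩, hq⟩ _ hne
    have hqT := hq; rw [mem_T] at hqT
    rw [F_W_val _ _ _ hpT.1 hpT.2.1 (le_of_lt hqT.1) (le_of_lt hqT.2.1), if_neg, smul_zero]
    rintro ⟨rfl, rfl, rfl⟩
    exact hne rfl
  · intro habs; exact absurd (Finset.mem_univ _) habs

lemma indep_Dw (n : ℕ) :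
    LinearIndependent ℝ (fun p : {x // x ∈ T n} => Dw p.1.1 p.1.2.1 p.1.2.2) := by
  rw [Fintype.linearIndependent_iff]
  intro g hg
  suffices H : ∀ N, ∀ p : {x // x ∈ T n}, n ≤ p.1.2.2 + N → g p = 0 by
    intro p; exact H n p (Nat.le_add_left _ _)
  intro N
  induction N with
  | zero =>
    rintro ⟨⟨x, y, z⟩, hp⟩ hz
    have hpT : x < y ∧ y < z ∧ x + y + z = n := by simpa [mem_T] using hp
    have hz' : n ≤ z + 0 := hz
    exact absurd hz' (by omega)
  | succ N ih =>
    rintro ⟨⟨x, y, z⟩, hp⟩ hz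
    have hpT : x < y ∧ y < z ∧ x + y + z = n := by simpa [mem_T] using hp
    obtain ⟨hxy, hyz, hs⟩ := hpT
    have hz' : n ≤ z + (N + 1) := hz
    have h := congrArg (F (x, y, z+1)) hg
    simp only [map_sum, map_smul, map_zero] at h
    have hsplit : ∀ q : {x // x ∈ T n},
        g q • F (x,y,z+1) (Dw q.1.1 q.1.2.1 q.1.2.2)
          = g q * (if q.1.1+1 = x ∧ q.1.2.1 = y ∧ q.1.2.2 = z+1 then 1 else 0)
          + g q * (if q.1.1 = x ∧ q.1.2.1+1 = y ∧ q.1.2.2 = z+1 then 1 else 0)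
          + g q * (if q.1.1 = x ∧ q.1.2.1 = y ∧ q.1.2.2+1 = z+1 then 1 else 0) := by
      intro q
      have hq := q.2; rw [mem_T] at hq
      rw [F_Dw_val _ _ _ (by omega) (by omega) hq.1 hq.2.1, smul_eq_mul]
      ring
    rw [Finset.sum_congr rfl (fun q _ => hsplit q), Finset.sum_add_distrib,
      Finset.sum_add_distrib] at h
    have h1 : (∑ q : {x // x ∈ T n},
        g q * (if q.1.1+1 = x ∧ q.1.2.1 = y ∧ q.1.2.2 = z+1 then 1 else 0)) = 0 := by
      apply Finset.sum_eq_zero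
      rintro ⟨⟨qa, qb, qc⟩, hq⟩ _
      by_cases hcond : qa+1 = x ∧ qb = y ∧ qc = z+1
      · rw [if_pos hcond, mul_one]
        obtain ⟨hc1, hc2, hc3⟩ := hcond
        have e3 : qc = z + 1 := hc3
        exact ih ⟨(qa,qb,qc), hq⟩ (by show n ≤ qc + N; omega)
      · rw [if_neg hcond, mul_zero]
    have h2 : (∑ q : {x // x ∈ T n},
        g q * (if q.1.1 = x ∧ q.1.2.1+1 = y ∧ q.1.2.2 = z+1 then 1 else 0)) = 0 := by
      apply Finset.sum_eq_zero
      rintro ⟨⟨qa, qb, qc⟩, hq⟩ _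
      by_cases hcond : qa = x ∧ qb+1 = y ∧ qc = z+1
      · rw [if_pos hcond, mul_one]
        obtain ⟨hc1, hc2, hc3⟩ := hcond
        have e3 : qc = z + 1 := hc3
        exact ih ⟨(qa,qb,qc), hq⟩ (by show n ≤ qc + N; omega)
      · rw [if_neg hcond, mul_zero]
    have h3 : (∑ q : {x // x ∈ T n},
        g q * (if q.1.1 = x ∧ q.1.2.1 = y ∧ q.1.2.2+1 = z+1 then 1 else 0))
        = g ⟨(x,y,z), hp⟩ := by
      rw [Finset.sum_eq_single (⟨(x,y,z), hp⟩ : {x // x ∈ T n})]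
      · rw [if_pos ⟨rfl, rfl, rfl⟩, mul_one]
      · rintro ⟨⟨qa, qb, qc⟩, hq⟩ _ hne
        rw [if_neg, mul_zero]
        rintro ⟨hc1, hc2, hc3⟩
        have e1 : qa = x := hc1
        have e2 : qb = y := hc2
        have e3 : qc + 1 = z + 1 := hc3
        apply hne
        apply Subtype.ext
        show (qa, qb, qc) = (x, y, z)
        rw [e1, e2, show qc = z from by omega]
      · intro habs; exact absurd (Finset.mem_univ _) habs
    rw [h1, h2, h3] at h
    simpa using h

lemma SW_eq_range (d : ℕ) :
    SW d = Set.range (fun p : {x // x ∈ T d} => W p.1.1 p.1.2.1 p.1.2.2) := by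
  rw [SW, Set.image_eq_range]
  rfl

lemma SD_eq_range (d : ℕ) :
    SD d = Set.range (fun p : {x // x ∈ T d} => Dw p.1.1 p.1.2.1 p.1.2.2) := by
  rw [SD, Set.image_eq_range]
  rfl

lemma finrank_Theta (d : ℕ) : Module.finrank ℝ (ThetaPD 2 3 d) = Q d := by
  rw [Theta_eq, SW_eq_range, finrank_span_eq_card (indep_W d), Q]
  exact Fintype.card_coe _

lemma finrank_DImg (d : ℕ) : Module.finrank ℝ (DImg 2 0 3 d) = Q (d-1) := by
  rw [DImg_eq, SD_eq_range, finrank_span_eq_card (indep_Dw (d-1)), Q]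
  exact Fintype.card_coe _

lemma DImg_le_Theta (d : ℕ) : DImg 2 0 3 d ≤ ThetaPD 2 3 d := by
  rw [DImg_eq, Theta_eq, Submodule.span_le]
  rintro _ ⟨⟨a,b,c⟩, hp, rfl⟩
  simp only [Finset.mem_coe, mem_T] at hp
  show Dw a b c ∈ Submodule.span ℝ (SW d)
  have h1 := W_mem_span (a+1) b c
  rw [show a+1+b+c = d from by omega] at h1
  have h2 := W_mem_span a (b+1) c
  rw [show a+(b+1)+c = d from by omega] at h2
  have h3 := W_mem_span a b (c+1)
  rw [show a+b+(c+1) = d from by omega] at h3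
  exact add_mem (add_mem h1 h2) h3

lemma dimH (d : ℕ) : dimHpd 2 3 d = Q d - Q (d-1) := by
  have hsup : (⨆ i : Fin (2-1), DImg 2 i 3 d) = DImg 2 0 3 d :=
    le_antisymm (iSup_le fun i => by rw [fin1_eq_zero i])
      (le_iSup (fun i : Fin (2-1) => DImg 2 i 3 d) 0)
  rw [dimHpd, hsup]
  haveI hfin : FiniteDimensional ℝ (ThetaPD 2 3 d) := by
    rw [Theta_eq, SW_eq_range]
    exact FiniteDimensional.span_of_finite ℝ (Set.finite_range _)
  have hq := Submodule.finrank_quotient_add_finrank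
    (Submodule.comap (ThetaPD 2 3 d).subtype (DImg 2 0 3 d))
  have hco : Module.finrank ℝ
      (Submodule.comap (ThetaPD 2 3 d).subtype (DImg 2 0 3 d)) = Q (d-1) := by
    rw [(Submodule.comapSubtypeEquivOfLe (DImg_le_Theta d)).finrank_eq, finrank_DImg]
  rw [hco, finrank_Theta] at hq
  omega

end Stmt8Aux
end
noncomputable section
namespace Stmt8Aux

lemma Qdiff0 (d : ℕ) (h : d < 3) : Q d - Q (d-1) = 0 := by
  rw [Qval, Qval]
  interval_cases d <;> rfl

lemma Qdiff4 (k : ℕ) : Q (4+6*k) - Q (3+6*k) = k := by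
  rw [Qval, Qval]
  rw [show (4+6*k)*(4+6*k) = 36*(k*k)+48*k+16 from by ring,
    show (3+6*k)*(3+6*k) = 36*(k*k)+36*k+9 from by ring]
  generalize k*k = s
  omega

lemma Qdiff3 (k : ℕ) : Q (3+6*k) - Q (2+6*k) = k+1 := by
  rw [Qval, Qval]
  rw [show (3+6*k)*(3+6*k) = 36*(k*k)+36*k+9 from by ring,
    show (2+6*k)*(2+6*k) = 36*(k*k)+24*k+4 from by ring]
  generalize k*k = s
  omega

lemma Qdiff5 (k : ℕ) : Q (5+6*k) - Q (4+6*k) = k+1 := by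
  rw [Qval, Qval]
  rw [show (5+6*k)*(5+6*k) = 36*(k*k)+60*k+25 from by ring,
    show (4+6*k)*(4+6*k) = 36*(k*k)+48*k+16 from by ring]
  generalize k*k = s
  omega

lemma Qdiff6 (k : ℕ) : Q (6+6*k) - Q (5+6*k) = k+1 := by
  rw [Qval, Qval]
  rw [show (6+6*k)*(6+6*k) = 36*(k*k)+72*k+36 from by ring,
    show (5+6*k)*(5+6*k) = 36*(k*k)+60*k+25 from by ring]
  generalize k*k = s
  omega

lemma Qdiff7 (k : ℕ) : Q (7+6*k) - Q (6+6*k) = k+1 := by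
  rw [Qval, Qval]
  rw [show (7+6*k)*(7+6*k) = 36*(k*k)+84*k+49 from by ring,
    show (6+6*k)*(6+6*k) = 36*(k*k)+72*k+36 from by ring]
  generalize k*k = s
  omega

lemma Qdiff8 (k : ℕ) : Q (8+6*k) - Q (7+6*k) = k+1 := by
  rw [Qval, Qval]
  rw [show (8+6*k)*(8+6*k) = 36*(k*k)+96*k+64 from by ring,
    show (7+6*k)*(7+6*k) = 36*(k*k)+84*k+49 from by ring]
  generalize k*k = s
  omega

lemma Qdiff58 (k d : ℕ) (h1 : 5+6*k ≤ d) (h2 : d ≤ 8+6*k) : Q d - Q (d-1) = k+1 := by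
  obtain ⟨j, hj, rfl⟩ : ∃ j, j ≤ 3 ∧ d = 5+6*k+j := ⟨d-(5+6*k), by omega, by omega⟩
  interval_cases j
  · rw [show 5+6*k+0 = 5+6*k from by omega, show 5+6*k-1 = 4+6*k from by omega]
    exact Qdiff5 k
  · rw [show 5+6*k+1 = 6+6*k from by omega, show 6+6*k-1 = 5+6*k from by omega]
    exact Qdiff6 k
  · rw [show 5+6*k+2 = 7+6*k from by omega, show 7+6*k-1 = 6+6*k from by omega]
    exact Qdiff7 k
  · rw [show 5+6*k+3 = 8+6*k from by omega, show 8+6*k-1 = 7+6*k from by omega]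
    exact Qdiff8 k

end Stmt8Aux
end

open Stmt8Aux in
theorem stmt8 :
    ((∀ d : ℕ, d < 3 → dimHpd 2 3 d = 0) ∧
     (∀ k : ℕ, dimHpd 2 3 (4 + 6 * k) = k) ∧
     (∀ k : ℕ, dimHpd 2 3 (3 + 6 * k) = k + 1) ∧
     (∀ k d : ℕ, 5 + 6 * k ≤ d → d ≤ 8 + 6 * k → dimHpd 2 3 d = k + 1)) ∧
    ((∀ d : ℕ, d < 3 → Ppart d 3 - Ppart (d - 1) 3 = 0) ∧
     (∀ k : ℕ, Ppart (4 + 6 * k) 3 - Ppart (3 + 6 * k) 3 = k) ∧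
     (∀ k : ℕ, Ppart (3 + 6 * k) 3 - Ppart (2 + 6 * k) 3 = k + 1) ∧
     (∀ k d : ℕ, 5 + 6 * k ≤ d → d ≤ 8 + 6 * k → Ppart d 3 - Ppart (d - 1) 3 = k + 1)) := by
  refine ⟨⟨?_, ?_, ?_, ?_⟩, ?_, ?_, ?_, ?_⟩
  · intro d hd; rw [dimH]; exact Qdiff0 d hd
  · intro k; rw [dimH, show 4+6*k-1 = 3+6*k from by omega]; exact Qdiff4 k
  · intro k; rw [dimH, show 3+6*k-1 = 2+6*k from by omega]; exact Qdiff3 k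
  · intro k d h1 h2; rw [dimH]; exact Qdiff58 k d h1 h2
  · intro d hd; rw [Ppart_eq, Ppart_eq]; exact Qdiff0 d hd
  · intro k; rw [Ppart_eq, Ppart_eq]; exact Qdiff4 k
  · intro k; rw [Ppart_eq, Ppart_eq]; exact Qdiff3 k
  · intro k d h1 h2; rw [Ppart_eq, Ppart_eq]; exact Qdiff58 k d h1 h2
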